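/- Let v_1, ..., v_r be vectors in ℝ^d and h_1, ..., h_r be reals with 0 < h_i < 1 for all i, and let μ > 0. Then the Fisher information with known sizes dominates the β-information with unknown Poisson sizes in the Loewner order: μ ∑_{i=1}^r v_i v_i' / ( h_i (1−h_i) ) − μ [ ∑_{i=1}^r v_i v_i' / h_i − (∑_{i=1}^r v_i)(∑_{i=1}^r v_i)' / (∑_{i=1}^r h_i) ] is positive semidefinite. Hence knowing the sizes n_i never decreases the asymptotic precision of β (the efficiency loss ratio ρ is at most 1). -/

import Mathlib

open Matrix

lemma psd_vecMulVec {d : ℕ} (a : Fin d → ℝ) : (vecMulVec a a).PosSemidef := by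
  rw [vecMulVec_eq Unit]
  have : replicateCol Unit a = (replicateRow Unit a)ᴴ := by
    ext i j; simp [replicateCol, replicateRow]
  rw [this]
  exact posSemidef_conjTranspose_mul_self _

lemma psd_smul {d : ℕ} {M : Matrix (Fin d) (Fin d) ℝ} (hM : M.PosSemidef) {c : ℝ}
    (hc : 0 ≤ c) : (c • M).PosSemidef := by
  refine .of_dotProduct_mulVec_nonneg ?_ ?_
  · unfold Matrix.IsHermitian
    rw [conjTranspose_smul, hM.1.eq]
    simp
  · intro x
    have := hM.dotProduct_mulVec_nonneg x
    simp only [smul_mulVec, dotProduct_smul, smul_eq_mul]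
    positivity

lemma psd_sum {d r : ℕ} (M : Fin r → Matrix (Fin d) (Fin d) ℝ)
    (hM : ∀ i, (M i).PosSemidef) : (∑ i, M i).PosSemidef := by
  induction (Finset.univ : Finset (Fin r)) using Finset.cons_induction with
  | empty => simpa using Matrix.PosSemidef.zero
  | cons i s hi ih =>
    rw [Finset.sum_cons]
    exact (hM i).add ih

/-- The Fisher information for `β` with known sizes dominates the profiled `β`-information
with unknown Poisson sizes in the Loewner order, so the efficiency ratio `ρ` is at most 1. -/
theorem known_sizes_info_dominates {d r : ℕ} (v : Fin r → Fin d → ℝ) (h : Fin r → ℝ)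
    (hh : ∀ i, h i ∈ Set.Ioo (0 : ℝ) 1) (μ : ℝ) (hμ : 0 < μ) :
    (μ • (∑ i, (h i * (1 - h i))⁻¹ • vecMulVec (v i) (v i)) -
      μ • ((∑ i, (h i)⁻¹ • vecMulVec (v i) (v i)) -
        (∑ i, h i)⁻¹ • vecMulVec (∑ i, v i) (∑ i, v i))).PosSemidef := by
  have key : μ • (∑ i, (h i * (1 - h i))⁻¹ • vecMulVec (v i) (v i)) -
      μ • ((∑ i, (h i)⁻¹ • vecMulVec (v i) (v i)) -
        (∑ i, h i)⁻¹ • vecMulVec (∑ i, v i) (∑ i, v i)) =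
      (∑ i, (μ * (1 - h i)⁻¹) • vecMulVec (v i) (v i)) +
        (μ * (∑ i, h i)⁻¹) • vecMulVec (∑ i, v i) (∑ i, v i) := by
    rw [smul_sub, sub_sub_eq_add_sub, ← smul_assoc, smul_eq_mul, add_sub_right_comm]
    congr 1
    rw [Finset.smul_sum, Finset.smul_sum, ← Finset.sum_sub_distrib]
    refine Finset.sum_congr rfl fun i _ => ?_
    rw [smul_smul, smul_smul, ← sub_smul]
    congr 1
    have h1 := (hh i).1
    have h2 := (hh i).2
    have hne : h i ≠ 0 := ne_of_gt h1
    have hne2 : (1 : ℝ) - h i ≠ 0 := ne_of_gt (by linarith)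
    field_simp
    ring
  rw [key]
  refine (psd_sum _ fun i => ?_).add (psd_smul (psd_vecMulVec _) ?_)
  · refine psd_smul (psd_vecMulVec _) ?_
    have h2 := (hh i).2
    have : (0:ℝ) < 1 - h i := by linarith
    positivity
  · have : 0 ≤ ∑ i, h i := Finset.sum_nonneg fun i _ => (hh i).1.le
    positivity
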